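/- Let T be a subdivision of the claw. Then the complement of T is 5-connected if and only if T has at least 9 vertices. -/

import Mathlib

/-- The subdivision of the claw `C_{x,y,z}`: a center vertex attached to three paths
with `x`, `y`, and `z` vertices respectively. -/
def clawSubdiv (x y z : ℕ) : SimpleGraph (Option (Fin x ⊕ Fin y ⊕ Fin z)) :=
  SimpleGraph.fromRel (fun a b =>
    match a, b with
    | none, some (Sum.inl i) => (i : ℕ) = 0
    | none, some (Sum.inr (Sum.inl i)) => (i : ℕ) = 0
    | none, some (Sum.inr (Sum.inr i)) => (i : ℕ) = 0
    | some (Sum.inl i), some (Sum.inl j) => (i : ℕ) + 1 = (j : ℕ)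
    | some (Sum.inr (Sum.inl i)), some (Sum.inr (Sum.inl j)) => (i : ℕ) + 1 = (j : ℕ)
    | some (Sum.inr (Sum.inr i)), some (Sum.inr (Sum.inr j)) => (i : ℕ) + 1 = (j : ℕ)
    | _, _ => False)

namespace ClawAux
variable {x y z : ℕ}

/-- Numeric encoding of the vertices of the subdivided claw. -/
def en : Option (Fin x ⊕ Fin y ⊕ Fin z) → ℕ
  | none => 0
  | some (Sum.inl i) => 4 * (i : ℕ) + 5
  | some (Sum.inr (Sum.inl i)) => 4 * (i : ℕ) + 6
  | some (Sum.inr (Sum.inr i)) => 4 * (i : ℕ) + 7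

lemma en_inj : Function.Injective (en (x := x) (y := y) (z := z)) := by
  intro a b h
  rcases a with _ | (i | i | i) <;> rcases b with _ | (j | j | j) <;>
    simp_all [en, Fin.ext_iff] <;> omega

lemma en_spec (u : Option (Fin x ⊕ Fin y ⊕ Fin z)) :
    en u = 0 ∨ (5 ≤ en u ∧ en u % 4 ≠ 0) := by
  rcases u with _ | (i | i | i) <;> simp [en] <;> omega

lemma adj_iff (u v : Option (Fin x ⊕ Fin y ⊕ Fin z)) :
    (clawSubdiv x y z).Adj u v ↔
      (en v = en u + 4 ∨ en u = en v + 4 ∨ (en u = 0 ∧ 5 ≤ en v ∧ en v ≤ 7) ∨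
        (en v = 0 ∧ 5 ≤ en u ∧ en u ≤ 7)) := by
  rcases u with _ | (i | i | i) <;> rcases v with _ | (j | j | j) <;>
    simp [clawSubdiv, en, SimpleGraph.fromRel_adj, Fin.ext_iff] <;> omega

lemma nbr {m n : ℕ} (hm : m = 0 ∨ (5 ≤ m ∧ m % 4 ≠ 0)) (hn : n = 0 ∨ (5 ≤ n ∧ n % 4 ≠ 0))
    (h : n = m + 4 ∨ m = n + 4 ∨ (m = 0 ∧ 5 ≤ n ∧ n ≤ 7) ∨ (n = 0 ∧ 5 ≤ m ∧ m ≤ 7)) :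
    n = m + 4 ∨ (9 ≤ m ∧ m = n + 4) ∨ (5 ≤ m ∧ m ≤ 7 ∧ n = 0) ∨
      (m = 0 ∧ (n = 5 ∨ n = 6 ∨ n = 7)) := by
  rcases hm with hm | hm <;> rcases hn with hn | hn <;> omega

set_option maxHeartbeats 1000000 in
lemma deg_nat {m a b c d : ℕ}
    (sa : a = 0 ∨ (5 ≤ a ∧ a % 4 ≠ 0)) (sb : b = 0 ∨ (5 ≤ b ∧ b % 4 ≠ 0))
    (sc : c = 0 ∨ (5 ≤ c ∧ c % 4 ≠ 0)) (sd : d = 0 ∨ (5 ≤ d ∧ d % 4 ≠ 0))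
    (ha : a = m + 4 ∨ (9 ≤ m ∧ m = a + 4) ∨ (5 ≤ m ∧ m ≤ 7 ∧ a = 0) ∨
      (m = 0 ∧ (a = 5 ∨ a = 6 ∨ a = 7)))
    (hb : b = m + 4 ∨ (9 ≤ m ∧ m = b + 4) ∨ (5 ≤ m ∧ m ≤ 7 ∧ b = 0) ∨
      (m = 0 ∧ (b = 5 ∨ b = 6 ∨ b = 7)))
    (hc : c = m + 4 ∨ (9 ≤ m ∧ m = c + 4) ∨ (5 ≤ m ∧ m ≤ 7 ∧ c = 0) ∨
      (m = 0 ∧ (c = 5 ∨ c = 6 ∨ c = 7)))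
    (hd : d = m + 4 ∨ (9 ≤ m ∧ m = d + 4) ∨ (5 ≤ m ∧ m ≤ 7 ∧ d = 0) ∨
      (m = 0 ∧ (d = 5 ∨ d = 6 ∨ d = 7)))
    (e1 : a ≠ b) (e2 : a ≠ c) (e3 : a ≠ d) (e4 : b ≠ c) (e5 : b ≠ d) (e6 : c ≠ d) :
    False := by
  rcases ha with h|h|h|⟨h,h0|h0|h0⟩ <;> rcases hb with h'|h'|h'|⟨h',h1|h1|h1⟩ <;>
    rcases hc with h''|h''|h''|⟨h'',h2|h2|h2⟩ <;>
    rcases hd with h'''|h'''|h'''|⟨h''',h3|h3|h3⟩ <;> omega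

set_option maxHeartbeats 1000000 in
lemma c4_nat {m m' a b : ℕ}
    (sa : a = 0 ∨ (5 ≤ a ∧ a % 4 ≠ 0)) (sb : b = 0 ∨ (5 ≤ b ∧ b % 4 ≠ 0))
    (h1 : a = m + 4 ∨ (9 ≤ m ∧ m = a + 4) ∨ (5 ≤ m ∧ m ≤ 7 ∧ a = 0) ∨
      (m = 0 ∧ (a = 5 ∨ a = 6 ∨ a = 7)))
    (h2 : b = m + 4 ∨ (9 ≤ m ∧ m = b + 4) ∨ (5 ≤ m ∧ m ≤ 7 ∧ b = 0) ∨
      (m = 0 ∧ (b = 5 ∨ b = 6 ∨ b = 7)))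
    (h3 : a = m' + 4 ∨ (9 ≤ m' ∧ m' = a + 4) ∨ (5 ≤ m' ∧ m' ≤ 7 ∧ a = 0) ∨
      (m' = 0 ∧ (a = 5 ∨ a = 6 ∨ a = 7)))
    (h4 : b = m' + 4 ∨ (9 ≤ m' ∧ m' = b + 4) ∨ (5 ≤ m' ∧ m' ≤ 7 ∧ b = 0) ∨
      (m' = 0 ∧ (b = 5 ∨ b = 6 ∨ b = 7)))
    (e1 : m ≠ m') (e2 : a ≠ b) : False := by
  rcases h1 with h|h|h|⟨h,h0|h0|h0⟩ <;> rcases h2 with h'|h'|h'|⟨h',h1|h1|h1⟩ <;>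
    rcases h3 with h''|h''|h''|⟨h'',h2|h2|h2⟩ <;>
    rcases h4 with h'''|h'''|h'''|⟨h''',h3|h3|h3⟩ <;> omega

lemma claw_deg {v a b c d : Option (Fin x ⊕ Fin y ⊕ Fin z)}
    (hab : a ≠ b) (hac : a ≠ c) (had : a ≠ d) (hbc : b ≠ c) (hbd : b ≠ d) (hcd : c ≠ d)
    (ha : (clawSubdiv x y z).Adj v a) (hb : (clawSubdiv x y z).Adj v b)
    (hc : (clawSubdiv x y z).Adj v c) (hd : (clawSubdiv x y z).Adj v d) : False := by
  rw [adj_iff] at ha hb hc hd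
  exact deg_nat (en_spec a) (en_spec b) (en_spec c) (en_spec d)
    (nbr (en_spec v) (en_spec a) ha) (nbr (en_spec v) (en_spec b) hb)
    (nbr (en_spec v) (en_spec c) hc) (nbr (en_spec v) (en_spec d) hd)
    (fun h => hab (en_inj h)) (fun h => hac (en_inj h)) (fun h => had (en_inj h))
    (fun h => hbc (en_inj h)) (fun h => hbd (en_inj h)) (fun h => hcd (en_inj h))

lemma claw_c4 {u v a b : Option (Fin x ⊕ Fin y ⊕ Fin z)}
    (huv : u ≠ v) (hab : a ≠ b)
    (h1 : (clawSubdiv x y z).Adj u a) (h2 : (clawSubdiv x y z).Adj u b)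
    (h3 : (clawSubdiv x y z).Adj v a) (h4 : (clawSubdiv x y z).Adj v b) : False := by
  rw [adj_iff] at h1 h2 h3 h4
  exact c4_nat (en_spec a) (en_spec b)
    (nbr (en_spec u) (en_spec a) h1) (nbr (en_spec u) (en_spec b) h2)
    (nbr (en_spec v) (en_spec a) h3) (nbr (en_spec v) (en_spec b) h4)
    (fun h => huv (en_inj h)) (fun h => hab (en_inj h))

lemma exists_adj_of_reachable {α : Type*} {G : SimpleGraph α} {u v : α}
    (h : G.Reachable u v) (hne : u ≠ v) : ∃ w, G.Adj u w := by
  obtain ⟨p⟩ := h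
  cases p with
  | nil => exact absurd rfl hne
  | cons h _ => exact ⟨_, h⟩

lemma four_distinct {α : Type*} {s : Set α} (hfin : s.Finite) (h : 4 ≤ s.ncard) :
    ∃ a b c d, a ∈ s ∧ b ∈ s ∧ c ∈ s ∧ d ∈ s ∧
      a ≠ b ∧ a ≠ c ∧ a ≠ d ∧ b ≠ c ∧ b ≠ d ∧ c ≠ d := by
  obtain ⟨a, ha⟩ := (Set.ncard_pos hfin).mp (by omega)
  have h1 : (s \ {a}).ncard = s.ncard - 1 := Set.ncard_diff_singleton_of_mem ha
  obtain ⟨b, hb⟩ := (Set.ncard_pos (hfin.diff (t := {a}))).mp (by rw [h1]; omega)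
  have h2 : ((s \ {a}) \ {b}).ncard = (s \ {a}).ncard - 1 :=
    Set.ncard_diff_singleton_of_mem hb
  obtain ⟨c, hc⟩ := (Set.ncard_pos ((hfin.diff (t := {a})).diff (t := {b}))).mp (by rw [h2, h1]; omega)
  have h3 : (((s \ {a}) \ {b}) \ {c}).ncard = ((s \ {a}) \ {b}).ncard - 1 :=
    Set.ncard_diff_singleton_of_mem hc
  obtain ⟨d, hd⟩ := (Set.ncard_pos (((hfin.diff (t := {a})).diff (t := {b})).diff (t := {c}))).mp
    (by rw [h3, h2, h1]; omega)
  simp only [Set.mem_diff, Set.mem_singleton_iff] at hb hc hd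
  exact ⟨a, b, c, d, ha, hb.1, hc.1.1, hd.1.1.1,
    fun e => hb.2 e.symm, fun e => hc.1.2 e.symm, fun e => hd.1.1.2 e.symm,
    fun e => hc.2 e.symm, fun e => hd.1.2 e.symm, fun e => hd.2 e.symm⟩

end ClawAux

/-- Let `T` be a subdivision of the claw. Then the complement of `T` is 5-connected
(removing any set of fewer than 5 vertices leaves it connected with at least 2 vertices)
if and only if `T` has at least 9 vertices. -/
theorem stmt2 {V : Type*} [Fintype V] (T : SimpleGraph V)
    (hsub : ∃ x y z : ℕ, 1 ≤ x ∧ 1 ≤ y ∧ 1 ≤ z ∧ Nonempty (T ≃g clawSubdiv x y z)) :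
    (∀ s : Set V, s.ncard < 5 →
        ((Tᶜ.induce sᶜ).Connected ∧ 2 ≤ (sᶜ : Set V).ncard)) ↔
      9 ≤ Fintype.card V := by
  classical
  obtain ⟨x, y, z, hx, hy, hz, ⟨e⟩⟩ := hsub
  -- transported structural facts
  have tdeg : ∀ v a b c d : V, a ≠ b → a ≠ c → a ≠ d → b ≠ c → b ≠ d → c ≠ d →
      T.Adj v a → T.Adj v b → T.Adj v c → T.Adj v d → False := by
    intro v a b c d h1 h2 h3 h4 h5 h6 ha hb hc hd
    exact ClawAux.claw_deg (fun h => h1 (e.toEquiv.injective h))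
      (fun h => h2 (e.toEquiv.injective h)) (fun h => h3 (e.toEquiv.injective h))
      (fun h => h4 (e.toEquiv.injective h)) (fun h => h5 (e.toEquiv.injective h))
      (fun h => h6 (e.toEquiv.injective h))
      (e.map_adj_iff.mpr ha) (e.map_adj_iff.mpr hb) (e.map_adj_iff.mpr hc)
      (e.map_adj_iff.mpr hd)
  have tc4 : ∀ u v a b : V, u ≠ v → a ≠ b →
      T.Adj u a → T.Adj u b → T.Adj v a → T.Adj v b → False := by
    intro u v a b h1 h2 ha hb hc hd
    exact ClawAux.claw_c4 (fun h => h1 (e.toEquiv.injective h))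
      (fun h => h2 (e.toEquiv.injective h))
      (e.map_adj_iff.mpr ha) (e.map_adj_iff.mpr hb) (e.map_adj_iff.mpr hc)
      (e.map_adj_iff.mpr hd)
  constructor
  · -- forward direction
    intro H
    by_contra hcard
    push_neg at hcard
    have hcard8 : Fintype.card V ≤ 8 := by omega
    set c : V := e.symm none with hc
    set n1 : V := e.symm (some (Sum.inl ⟨0, hx⟩)) with hn1
    set n2 : V := e.symm (some (Sum.inr (Sum.inl ⟨0, hy⟩))) with hn2
    set n3 : V := e.symm (some (Sum.inr (Sum.inr ⟨0, hz⟩))) with hn3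
    have hinj := e.toEquiv.symm.injective
    have d1 : c ≠ n1 := fun h => by simpa using hinj h
    have d2 : c ≠ n2 := fun h => by simpa using hinj h
    have d3 : c ≠ n3 := fun h => by simpa using hinj h
    have d4 : n1 ≠ n2 := fun h => by simpa using hinj h
    have d5 : n1 ≠ n3 := fun h => by simpa using hinj h
    have d6 : n2 ≠ n3 := fun h => by simpa using hinj h
    have adj1 : T.Adj c n1 := by
      rw [hc, hn1, e.symm.map_adj_iff, ClawAux.adj_iff]
      simp [ClawAux.en]
    have adj2 : T.Adj c n2 := by
      rw [hc, hn2, e.symm.map_adj_iff, ClawAux.adj_iff]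
      simp [ClawAux.en]
    have adj3 : T.Adj c n3 := by
      rw [hc, hn3, e.symm.map_adj_iff, ClawAux.adj_iff]
      simp [ClawAux.en]
    set K : Set V := {c, n1, n2, n3} with hK
    have hKcard : K.ncard = 4 := by
      rw [hK, Set.ncard_insert_of_notMem (by simp [d1, d2, d3]),
        Set.ncard_insert_of_notMem (by simp [d4, d5]),
        Set.ncard_insert_of_notMem (by simp [d6]), Set.ncard_singleton]
    have hcompl : K.ncard + Kᶜ.ncard = Fintype.card V := by
      rw [← Nat.card_eq_fintype_card]
      exact Set.ncard_add_ncard_compl K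
    obtain ⟨hconn, -⟩ := H Kᶜ (by omega)
    have hmemc : c ∈ Kᶜᶜ := by rw [compl_compl]; exact Set.mem_insert _ _
    have hmemn1 : n1 ∈ Kᶜᶜ := by
      rw [compl_compl]; exact Set.mem_insert_of_mem _ (Set.mem_insert _ _)
    have hreach := hconn.preconnected ⟨c, hmemc⟩ ⟨n1, hmemn1⟩
    obtain ⟨w, hw⟩ := ClawAux.exists_adj_of_reachable hreach
      (fun h => d1 (congrArg Subtype.val h))
    have hw' : Tᶜ.Adj c (w : V) := hw
    rw [SimpleGraph.compl_adj] at hw'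
    have hwmem : (w : V) ∈ K := by simpa using w.2
    rcases hwmem with h | h | h | h
    · exact hw'.1 h.symm
    · exact hw'.2 (h ▸ adj1)
    · exact hw'.2 (h ▸ adj2)
    · rw [Set.mem_singleton_iff] at h
      exact hw'.2 (h ▸ adj3)
  · -- backward direction
    intro h9 s hs
    have hcompl : s.ncard + sᶜ.ncard = Fintype.card V := by
      rw [← Nat.card_eq_fintype_card]
      exact Set.ncard_add_ncard_compl s
    have hW5 : 5 ≤ (sᶜ : Set V).ncard := by omega
    have hWne : (sᶜ : Set V).Nonempty := (Set.ncard_pos (Set.toFinite _)).mp (by omega)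
    refine ⟨?_, by omega⟩
    rw [SimpleGraph.connected_iff]
    refine ⟨?_, ?_⟩
    swap
    · obtain ⟨w, hw⟩ := hWne
      exact ⟨⟨w, hw⟩⟩
    intro u v
    by_contra hnr
    set A : Set V := {w | ∃ hw : w ∈ sᶜ, (Tᶜ.induce sᶜ).Reachable u ⟨w, hw⟩} with hA
    have hAW : A ⊆ sᶜ := fun w hw => hw.1
    have huA : (u : V) ∈ A := ⟨u.2, SimpleGraph.Reachable.refl u⟩
    have hvB : (v : V) ∈ sᶜ \ A := by
      refine ⟨v.2, fun hv => hnr ?_⟩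
      obtain ⟨hv', hr⟩ := hv
      exact hr
    have edge : ∀ a ∈ A, ∀ b ∈ sᶜ \ A, T.Adj a b := by
      rintro a ⟨haW, hra⟩ b ⟨hbW, hbA⟩
      by_contra hnadj
      have hne : a ≠ b := by
        rintro rfl
        exact hbA ⟨haW, hra⟩
      have hadj : (Tᶜ.induce sᶜ).Adj ⟨a, haW⟩ ⟨b, hbW⟩ := by
        show Tᶜ.Adj a b
        exact (SimpleGraph.compl_adj T a b).mpr ⟨hne, hnadj⟩
      exact hbA ⟨hbW, hra.trans hadj.reachable⟩
    have hAfin : A.Finite := Set.toFinite _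
    have hBfin : ((sᶜ : Set V) \ A).Finite := Set.toFinite _
    have hAle : A.ncard ≤ (sᶜ : Set V).ncard := Set.ncard_le_ncard hAW (Set.toFinite _)
    have hdiff : ((sᶜ : Set V) \ A).ncard = (sᶜ : Set V).ncard - A.ncard :=
      Set.ncard_diff hAW hAfin
    have hApos : 0 < A.ncard := (Set.ncard_pos hAfin).mpr ⟨_, huA⟩
    have hBpos : 0 < ((sᶜ : Set V) \ A).ncard := (Set.ncard_pos hBfin).mpr ⟨_, hvB⟩
    by_cases h2A : 2 ≤ A.ncard
    · by_cases h2B : 2 ≤ ((sᶜ : Set V) \ A).ncard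
      · obtain ⟨a1, ha1, a2, ha2, hnea⟩ := (Set.one_lt_ncard hAfin).mp h2A
        obtain ⟨b1, hb1, b2, hb2, hneb⟩ := (Set.one_lt_ncard hBfin).mp h2B
        exact tc4 a1 a2 b1 b2 hnea hneb (edge _ ha1 _ hb1) (edge _ ha1 _ hb2)
          (edge _ ha2 _ hb1) (edge _ ha2 _ hb2)
      · -- B has one element, A has at least 4
        have h4A : 4 ≤ A.ncard := by omega
        obtain ⟨a1, b1, c1, d1, ha1, hb1, hc1, hd1, e1, e2, e3, e4, e5, e6⟩ :=
          ClawAux.four_distinct hAfin h4A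
        exact tdeg (v : V) a1 b1 c1 d1 e1 e2 e3 e4 e5 e6
          (edge _ ha1 _ hvB).symm (edge _ hb1 _ hvB).symm
          (edge _ hc1 _ hvB).symm (edge _ hd1 _ hvB).symm
    · -- A has one element, B has at least 4
      have h4B : 4 ≤ ((sᶜ : Set V) \ A).ncard := by omega
      obtain ⟨a1, b1, c1, d1, ha1, hb1, hc1, hd1, e1, e2, e3, e4, e5, e6⟩ :=
        ClawAux.four_distinct hBfin h4B
      exact tdeg (u : V) a1 b1 c1 d1 e1 e2 e3 e4 e5 e6
        (edge _ huA _ ha1) (edge _ huA _ hb1) (edge _ huA _ hc1) (edge _ huA _ hd1)
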